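/- arXiv:1710.09020 — 4 statements merged into one kernel-verified Lean document; each statement's English description precedes it below -/
import Mathlib

section
/- For a random vector x in ℝ^d with E(vᵀx)⁴ ≤ R for every unit vector v, and its ℓ₄-norm shrunk version x̃ = min(‖x‖₄, τ)/‖x‖₄ · x, the operator norm of the bias satisfies ‖E(x xᵀ − x̃ x̃ᵀ)‖_op ≤ R√d / τ². -/
open MeasureTheory

/-- Entrywise ℓ₄-norm of a vector. -/
noncomputable def l4norm {d : ℕ} (x : EuclideanSpace ℝ (Fin d)) : ℝ :=
  (∑ j, (x j) ^ 4) ^ ((1 : ℝ) / 4)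

/-- ℓ₄-norm shrinkage of a vector at threshold τ. -/
noncomputable def shrink {d : ℕ} (τ : ℝ) (x : EuclideanSpace ℝ (Fin d)) :
    EuclideanSpace ℝ (Fin d) :=
  (min (l4norm x) τ / l4norm x) • x

lemma l4_nonneg {d : ℕ} (y : EuclideanSpace ℝ (Fin d)) : 0 ≤ l4norm y :=
  Real.rpow_nonneg (Finset.sum_nonneg fun j _ => by positivity) _

lemma l4_pow4 {d : ℕ} (y : EuclideanSpace ℝ (Fin d)) :
    (l4norm y) ^ 4 = ∑ j, (y j) ^ 4 := by
  have hs : (0:ℝ) ≤ ∑ j, (y j) ^ 4 := Finset.sum_nonneg fun j _ => by positivity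
  rw [l4norm, ← Real.rpow_natCast (_ ^ ((1:ℝ)/4)) 4, ← Real.rpow_mul hs]
  norm_num

lemma eq_zero_of_l4_eq_zero {d : ℕ} (y : EuclideanSpace ℝ (Fin d))
    (h : l4norm y = 0) : y = 0 := by
  have h4 : ∑ j, (y j) ^ 4 = 0 := by
    have := l4_pow4 y
    rw [h] at this; simpa using this.symm
  have hz : ∀ j ∈ Finset.univ, (y j) ^ 4 = 0 :=
    (Finset.sum_eq_zero_iff_of_nonneg (fun j _ => by positivity)).mp h4
  ext j
  have := hz j (Finset.mem_univ j)
  simpa [pow_eq_zero_iff] using this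

lemma inner_shrink {d : ℕ} (τ : ℝ) (v y : EuclideanSpace ℝ (Fin d)) :
    (inner ℝ v (shrink τ y) : ℝ) = (min (l4norm y) τ / l4norm y) * (inner ℝ v y : ℝ) := by
  rw [shrink, real_inner_smul_right]

lemma sq_inner_shrink_le {d : ℕ} {τ : ℝ} (hτ : 0 < τ) (v y : EuclideanSpace ℝ (Fin d)) :
    (inner ℝ v (shrink τ y) : ℝ) ^ 2 ≤ (inner ℝ v y : ℝ) ^ 2 := by
  rw [inner_shrink, mul_pow]
  rcases eq_or_lt_of_le (l4_nonneg y) with h | h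
  · have hy := eq_zero_of_l4_eq_zero y h.symm
    simp [hy]
  · have hc0 : 0 ≤ min (l4norm y) τ / l4norm y :=
      div_nonneg (le_min (l4_nonneg y) hτ.le) (l4_nonneg y)
    have hc1 : min (l4norm y) τ / l4norm y ≤ 1 :=
      div_le_one_of_le₀ (min_le_left _ _) (l4_nonneg y)
    have hc2 : (min (l4norm y) τ / l4norm y) ^ 2 ≤ 1 := by nlinarith
    calc (min (l4norm y) τ / l4norm y) ^ 2 * (inner ℝ v y : ℝ) ^ 2
        ≤ 1 * (inner ℝ v y : ℝ) ^ 2 := mul_le_mul_of_nonneg_right hc2 (sq_nonneg _)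
      _ = (inner ℝ v y : ℝ) ^ 2 := one_mul _

lemma ptwise_le {d : ℕ} {τ s : ℝ} (hτ : 0 < τ) (hs : 0 < s)
    (v y : EuclideanSpace ℝ (Fin d)) :
    (inner ℝ v y : ℝ) ^ 2 - (inner ℝ v (shrink τ y) : ℝ) ^ 2
      ≤ (s * (inner ℝ v y : ℝ) ^ 4 + (∑ j, (y j) ^ 4) / s) / (2 * τ ^ 2) := by
  have hL0 : 0 ≤ l4norm y := l4_nonneg y
  have hS : (∑ j, (y j) ^ 4) = (l4norm y) ^ 4 := (l4_pow4 y).symm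
  set ip : ℝ := (inner ℝ v y : ℝ)
  set L := l4norm y
  rw [hS]
  have hrhs0 : 0 ≤ (s * ip ^ 4 + L ^ 4 / s) / (2 * τ ^ 2) := by positivity
  rcases le_or_gt L τ with hcase | hcase
  · rcases eq_or_lt_of_le hL0 with h0 | h0
    · have hy := eq_zero_of_l4_eq_zero y h0.symm
      have h1 : ip = 0 := by simp [ip, hy]
      have h2 : (inner ℝ v (shrink τ y) : ℝ) = 0 := by
        rw [hy, shrink]; simp
      rw [h1, h2]
      norm_num
      positivity
    · have heq : shrink τ y = y := by
        rw [shrink, min_eq_left hcase, div_self (ne_of_gt h0), one_smul]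
      rw [heq]
      show ip ^ 2 - ip ^ 2 ≤ _
      rw [sub_self]
      exact hrhs0
  · have hsh : (0:ℝ) ≤ (inner ℝ v (shrink τ y) : ℝ) ^ 2 := sq_nonneg _
    have h2 : ip ^ 2 - (inner ℝ v (shrink τ y) : ℝ) ^ 2 ≤ ip ^ 2 := by linarith
    refine h2.trans ?_
    rw [le_div_iff₀ (by positivity : (0:ℝ) < 2 * τ ^ 2)]
    have hτ2 : τ ^ 2 ≤ L ^ 2 := by nlinarith
    have h3 : 2 * s * ip ^ 2 * L ^ 2 ≤ s ^ 2 * ip ^ 4 + L ^ 4 := by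
      nlinarith [sq_nonneg (s * ip ^ 2 - L ^ 2)]
    have h4 : ip ^ 2 * (2 * τ ^ 2) * s ≤ 2 * s * ip ^ 2 * L ^ 2 := by
      nlinarith [mul_nonneg (mul_nonneg hs.le (sq_nonneg ip)) (sub_nonneg.mpr hτ2)]
    calc ip ^ 2 * (2 * τ ^ 2) = (ip ^ 2 * (2 * τ ^ 2) * s) / s := by
            field_simp
      _ ≤ (s ^ 2 * ip ^ 4 + L ^ 4) / s := by gcongr; exact h4.trans h3
      _ = s * ip ^ 4 + L ^ 4 / s := by field_simp

lemma continuous_l4norm {d : ℕ} : Continuous (l4norm (d := d)) := by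
  unfold l4norm
  exact (continuous_finset_sum _ fun j _ => ((continuous_apply j).comp (PiLp.continuous_ofLp 2 _)).pow 4).rpow_const
    fun _ => Or.inr (by norm_num)

lemma measurable_l4norm {d : ℕ} : Measurable (l4norm (d := d)) :=
  continuous_l4norm.measurable

lemma measurable_shrink {d : ℕ} (τ : ℝ) :
    Measurable (shrink (d := d) τ) := by
  unfold shrink
  exact ((measurable_l4norm.min measurable_const).div measurable_l4norm).smul
    measurable_id

/-- operator-norm bias bound ‖E(x xᵀ − x̃ x̃ᵀ)‖_op ≤ R√d / τ²,
stated via the quadratic form over unit vectors (the matrix is symmetric). -/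
theorem shrinkage_bias_opNorm {d : ℕ} {Ω : Type*} [MeasurableSpace Ω]
    (μ : Measure Ω) [IsProbabilityMeasure μ]
    (x : Ω → EuclideanSpace ℝ (Fin d)) (R τ : ℝ) (hτ : 0 < τ)
    (hmeas : AEMeasurable x μ)
    (hint : ∀ v : EuclideanSpace ℝ (Fin d),
      Integrable (fun ω => (inner ℝ v (x ω) : ℝ) ^ 4) μ)
    (hR : ∀ v : EuclideanSpace ℝ (Fin d), ‖v‖ = 1 →
      ∫ ω, (inner ℝ v (x ω) : ℝ) ^ 4 ∂μ ≤ R) :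
    ∀ v : EuclideanSpace ℝ (Fin d), ‖v‖ = 1 →
      |∫ ω, ((inner ℝ v (x ω) : ℝ) ^ 2 - (inner ℝ v (shrink τ (x ω)) : ℝ) ^ 2) ∂μ|
        ≤ R * Real.sqrt d / τ ^ 2 := by
  intro v hv
  -- d ≥ 1
  have hd : 0 < d := by
    rcases Nat.eq_zero_or_pos d with h0 | h0
    · subst h0
      rw [Subsingleton.elim v 0, norm_zero] at hv
      norm_num at hv
    · exact h0
  set s : ℝ := Real.sqrt d with hsdef
  have hs : 0 < s := Real.sqrt_pos.mpr (by exact_mod_cast hd)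
  have hs2 : s ^ 2 = d := Real.sq_sqrt (by positivity)
  -- coordinate unit vectors
  have hcoords : ∀ j : Fin d,
      Integrable (fun ω => (x ω j) ^ 4) μ ∧ ∫ ω, (x ω j) ^ 4 ∂μ ≤ R := by
    intro j
    have hnorm : ‖(EuclideanSpace.single j (1:ℝ))‖ = 1 := by
      rw [EuclideanSpace.norm_single]; norm_num
    have hips : ∀ ω, (inner ℝ (EuclideanSpace.single j (1:ℝ)) (x ω) : ℝ) = x ω j := by
      intro ω; rw [EuclideanSpace.inner_single_left]; simp
    constructor
    · have := hint (EuclideanSpace.single j (1:ℝ))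
      simpa [hips] using this
    · have := hR (EuclideanSpace.single j (1:ℝ)) hnorm
      simpa [hips] using this
  have hR0 : 0 ≤ R := le_trans (integral_nonneg fun ω => by positivity) (hR v hv)
  -- define F, G
  set F : Ω → ℝ := fun ω =>
    (inner ℝ v (x ω) : ℝ) ^ 2 - (inner ℝ v (shrink τ (x ω)) : ℝ) ^ 2 with hF
  set G : Ω → ℝ := fun ω =>
    (s * (inner ℝ v (x ω) : ℝ) ^ 4 + (∑ j, (x ω j) ^ 4) / s) / (2 * τ ^ 2) with hG
  have hF_nonneg : ∀ ω, 0 ≤ F ω := fun ω =>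
    sub_nonneg.mpr (sq_inner_shrink_le hτ v (x ω))
  have hFG : ∀ ω, F ω ≤ G ω := fun ω => ptwise_le hτ hs v (x ω)
  have hG_nonneg : ∀ ω, 0 ≤ G ω := by
    intro ω
    have := Finset.sum_nonneg (fun j (_ : j ∈ Finset.univ) =>
      (by positivity : (0:ℝ) ≤ (x ω j) ^ 4))
    positivity
  -- integrability
  have hGsum : Integrable (fun ω => ∑ j, (x ω j) ^ 4) μ :=
    integrable_finset_sum _ fun j _ => (hcoords j).1
  have hGint : Integrable G μ :=
    (((hint v).const_mul s).add (hGsum.div_const s)).div_const (2 * τ ^ 2)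
  have hFmeas : AEStronglyMeasurable F μ := by
    have hg : Measurable fun y : EuclideanSpace ℝ (Fin d) =>
        (inner ℝ v y : ℝ) ^ 2 - (inner ℝ v (shrink τ y) : ℝ) ^ 2 := by
      have h1 : Measurable fun y : EuclideanSpace ℝ (Fin d) => (inner ℝ v y : ℝ) :=
        (continuous_const.inner continuous_id).measurable
      exact ((h1.pow_const 2).sub (((h1.comp (measurable_shrink τ)).pow_const 2)))
    exact (hg.comp_aemeasurable hmeas).aestronglyMeasurable
  have hFint : Integrable F μ := by
    refine hGint.mono hFmeas (Filter.Eventually.of_forall fun ω => ?_)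
    rw [Real.norm_eq_abs, Real.norm_eq_abs, abs_of_nonneg (hF_nonneg ω),
      abs_of_nonneg (hG_nonneg ω)]
    exact hFG ω
  -- compute/bound the integral
  have habs : |∫ ω, F ω ∂μ| = ∫ ω, F ω ∂μ :=
    abs_of_nonneg (integral_nonneg hF_nonneg)
  have hFle : ∫ ω, F ω ∂μ ≤ ∫ ω, G ω ∂μ := integral_mono hFint hGint hFG
  have hGval : ∫ ω, G ω ∂μ
      = (s * ∫ ω, (inner ℝ v (x ω) : ℝ) ^ 4 ∂μ
          + (∑ j, ∫ ω, (x ω j) ^ 4 ∂μ) / s) / (2 * τ ^ 2) := by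
    rw [hG]
    rw [integral_div]
    congr 1
    rw [integral_add ((hint v).const_mul s) (hGsum.div_const s),
      integral_const_mul, integral_div, integral_finset_sum _ fun j _ => (hcoords j).1]
  have hsumle : (∑ j, ∫ ω, (x ω j) ^ 4 ∂μ) ≤ d * R := by
    calc (∑ j, ∫ ω, (x ω j) ^ 4 ∂μ) ≤ ∑ _j : Fin d, R :=
          Finset.sum_le_sum fun j _ => (hcoords j).2
      _ = d * R := by simp [mul_comm]
  have hGle : ∫ ω, G ω ∂μ ≤ R * s / τ ^ 2 := by
    rw [hGval]
    have h1 : s * ∫ ω, (inner ℝ v (x ω) : ℝ) ^ 4 ∂μ ≤ s * R :=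
      mul_le_mul_of_nonneg_left (hR v hv) hs.le
    have h2 : (∑ j, ∫ ω, (x ω j) ^ 4 ∂μ) / s ≤ (d * R) / s := by
      gcongr
    have h3 : (s * R + (d * R) / s) / (2 * τ ^ 2) = R * s / τ ^ 2 := by
      field_simp
      linear_combination (-R) * hs2
    calc (s * ∫ ω, (inner ℝ v (x ω) : ℝ) ^ 4 ∂μ
          + (∑ j, ∫ ω, (x ω j) ^ 4 ∂μ) / s) / (2 * τ ^ 2)
        ≤ (s * R + (d * R) / s) / (2 * τ ^ 2) := by gcongr ?_ / _; linarith
      _ = R * s / τ ^ 2 := h3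
  show |∫ ω, F ω ∂μ| ≤ R * s / τ ^ 2
  rw [habs]
  exact hFle.trans hGle
end

section
/- For the ℓ₄-norm shrunk vector x̃ with threshold τ, the operator norm of x̃ x̃ᵀ − E(x̃ x̃ᵀ) is at most √d·τ² + √R, where R bounds the fourth moments E(vᵀx)⁴ over unit v. -/
open MeasureTheory

lemma sum_pow4_shrink_le {d : ℕ} (τ : ℝ) (hτ : 0 < τ) (y : EuclideanSpace ℝ (Fin d)) :
    ∑ j, (shrink τ y j) ^ 4 ≤ τ ^ 4 := by
  have hs : (0:ℝ) ≤ ∑ j, (y j) ^ 4 := by positivity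
  have hsum : ∑ j, (shrink τ y j) ^ 4
      = (min (l4norm y) τ / l4norm y) ^ 4 * ∑ j, (y j) ^ 4 := by
    rw [Finset.mul_sum]
    refine Finset.sum_congr rfl fun j _ => ?_
    simp [shrink, mul_pow]
  rw [hsum]
  rcases eq_or_ne (l4norm y) 0 with h0 | h0
  · have : ∑ j, (y j) ^ 4 = 0 := by
      have := h0
      unfold l4norm at this
      rcases (Real.rpow_eq_zero_iff_of_nonneg hs).mp this with ⟨h1, _⟩
      exact h1
    rw [this, mul_zero]
    positivity
  · have hL4 : (l4norm y) ^ 4 = ∑ j, (y j) ^ 4 := by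
      unfold l4norm
      rw [← Real.rpow_natCast ((∑ j, (y j) ^ 4) ^ ((1:ℝ)/4)) 4,
        ← Real.rpow_mul hs]
      norm_num
    have hLpos : 0 < l4norm y := by
      rcases lt_or_eq_of_le (Real.rpow_nonneg hs ((1:ℝ)/4)) with h | h
      · exact h
      · exact absurd h.symm h0
    have : (min (l4norm y) τ / l4norm y) ^ 4 * ∑ j, (y j) ^ 4
        = (min (l4norm y) τ) ^ 4 := by
      rw [div_pow, hL4]
      exact div_mul_cancel₀ _ (by rw [← hL4]; positivity)
    rw [this]
    have hmin0 : 0 ≤ min (l4norm y) τ := le_min hLpos.le hτ.le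
    exact pow_le_pow_left₀ hmin0 (min_le_right _ _) 4

lemma inner_shrink_sq_le {d : ℕ} (τ : ℝ) (hτ : 0 < τ) (y : EuclideanSpace ℝ (Fin d))
    (v : EuclideanSpace ℝ (Fin d)) (hv : ‖v‖ = 1) :
    (inner ℝ v (shrink τ y) : ℝ) ^ 2 ≤ Real.sqrt d * τ ^ 2 := by
  set z := shrink τ y with hz
  have h1 : (inner ℝ v z : ℝ) ^ 2 ≤ ‖z‖ ^ 2 := by
    have := abs_real_inner_le_norm v z
    rw [hv, one_mul] at this
    calc (inner ℝ v z : ℝ) ^ 2 = |(inner ℝ v z : ℝ)| ^ 2 := (sq_abs _).symm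
      _ ≤ ‖z‖ ^ 2 := by
        exact pow_le_pow_left₀ (abs_nonneg _) this 2
  have h2 : ‖z‖ ^ 2 = ∑ j, (z j) ^ 2 := by
    rw [EuclideanSpace.norm_eq, Real.sq_sqrt (by positivity)]
    simp [sq_abs]
  have h3 : (∑ j, (z j) ^ 2) ^ 2 ≤ (d : ℝ) * τ ^ 4 := by
    have hcs := Finset.sum_mul_sq_le_sq_mul_sq Finset.univ
      (fun _ : Fin d => (1:ℝ)) (fun j => (z j) ^ 2)
    simp only [one_mul, one_pow] at hcs
    calc (∑ j, (z j) ^ 2) ^ 2 ≤ (∑ _j : Fin d, (1:ℝ)) * ∑ j, ((z j) ^ 2) ^ 2 := hcs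
      _ = (d : ℝ) * ∑ j, (z j) ^ 4 := by
          simp [← pow_mul]
      _ ≤ (d : ℝ) * τ ^ 4 := by
          have := sum_pow4_shrink_le τ hτ y
          exact mul_le_mul_of_nonneg_left this (Nat.cast_nonneg d)
  have h4 : ∑ j, (z j) ^ 2 ≤ Real.sqrt d * τ ^ 2 := by
    have hnn : (0:ℝ) ≤ ∑ j, (z j) ^ 2 := by positivity
    have : Real.sqrt ((∑ j, (z j) ^ 2) ^ 2) ≤ Real.sqrt ((d : ℝ) * τ ^ 4) :=
      Real.sqrt_le_sqrt h3
    rw [Real.sqrt_sq hnn] at this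
    calc ∑ j, (z j) ^ 2 ≤ Real.sqrt ((d : ℝ) * τ ^ 4) := this
      _ = Real.sqrt d * τ ^ 2 := by
        rw [Real.sqrt_mul (Nat.cast_nonneg d)]
        congr 1
        rw [show τ ^ 4 = (τ ^ 2) ^ 2 by ring, Real.sqrt_sq (by positivity)]
  calc (inner ℝ v z : ℝ) ^ 2 ≤ ‖z‖ ^ 2 := h1
    _ = ∑ j, (z j) ^ 2 := h2
    _ ≤ Real.sqrt d * τ ^ 2 := h4

lemma shrink_measurable_inner {d : ℕ} (τ : ℝ) (v : EuclideanSpace ℝ (Fin d)) :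
    Measurable (fun y : EuclideanSpace ℝ (Fin d) => (inner ℝ v (shrink τ y) : ℝ) ^ 2) := by
  have hl4 : Measurable (fun y : EuclideanSpace ℝ (Fin d) => l4norm y) := by
    unfold l4norm
    exact (Real.continuous_rpow_const (by norm_num)).measurable.comp
      (Finset.measurable_sum _ fun j _ => ((continuous_apply j).comp (PiLp.continuous_ofLp 2 _)).measurable.pow_const 4)
  have hinner : Measurable (fun y : EuclideanSpace ℝ (Fin d) => (inner ℝ v y : ℝ)) :=
    (continuous_const.inner continuous_id).measurable
  have : (fun y : EuclideanSpace ℝ (Fin d) => (inner ℝ v (shrink τ y) : ℝ) ^ 2)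
      = fun y => ((min (l4norm y) τ / l4norm y) * (inner ℝ v y : ℝ)) ^ 2 := by
    funext y
    rw [shrink, real_inner_smul_right]
  rw [this]
  exact (((hl4.min measurable_const).div hl4).mul hinner).pow_const 2

/-- ‖x̃ x̃ᵀ − E(x̃ x̃ᵀ)‖_op ≤ √d·τ² + √R, stated via the
quadratic form over unit vectors (the matrix is symmetric). -/
theorem shrunk_outer_deviation_bound {d : ℕ} {Ω : Type*} [MeasurableSpace Ω]
    (μ : Measure Ω) [IsProbabilityMeasure μ]
    (x : Ω → EuclideanSpace ℝ (Fin d)) (R τ : ℝ) (hτ : 0 < τ)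
    (hmeas : AEMeasurable x μ)
    (hR : ∀ v : EuclideanSpace ℝ (Fin d), ‖v‖ = 1 →
      ∫ ω, (inner ℝ v (x ω) : ℝ) ^ 4 ∂μ ≤ R) :
    ∀ ω : Ω, ∀ v : EuclideanSpace ℝ (Fin d), ‖v‖ = 1 →
      |(inner ℝ v (shrink τ (x ω)) : ℝ) ^ 2
          - ∫ ω', (inner ℝ v (shrink τ (x ω')) : ℝ) ^ 2 ∂μ|
        ≤ Real.sqrt d * τ ^ 2 + Real.sqrt R := by
  intro ω v hv
  set B : ℝ := Real.sqrt d * τ ^ 2 with hB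
  have hBnn : 0 ≤ B := by positivity
  set A : Ω → ℝ := fun ω' => (inner ℝ v (shrink τ (x ω')) : ℝ) ^ 2 with hA
  have hAm : AEMeasurable A μ := (shrink_measurable_inner τ v).comp_aemeasurable hmeas
  have hAle : ∀ ω', A ω' ≤ B := fun ω' => inner_shrink_sq_le τ hτ (x ω') v hv
  have hAnn : ∀ ω', 0 ≤ A ω' := fun ω' => sq_nonneg _
  have hInt : Integrable A μ := by
    refine Integrable.mono' (integrable_const B) hAm.aestronglyMeasurable ?_
    filter_upwards with ω'
    rw [Real.norm_eq_abs, abs_of_nonneg (hAnn ω')]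
    exact hAle ω'
  have hI1 : 0 ≤ ∫ ω', A ω' ∂μ := integral_nonneg hAnn
  have hI2 : ∫ ω', A ω' ∂μ ≤ B := by
    calc ∫ ω', A ω' ∂μ ≤ ∫ _ω', B ∂μ := integral_mono hInt (integrable_const B)
          fun ω' => hAle ω'
      _ = B := by simp
  have key : |A ω - ∫ ω', A ω' ∂μ| ≤ B := by
    rw [abs_sub_le_iff]
    constructor
    · linarith [hAle ω]
    · linarith [hAnn ω]
  calc |A ω - ∫ ω', A ω' ∂μ| ≤ B := key
    _ ≤ B + Real.sqrt R := le_add_of_nonneg_right (Real.sqrt_nonneg R)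
end

section
/- Elementwise clipping bias bound: if x_j, x_k are random variables with E(x_j² x_k²) ≤ R and E x_j⁴, E x_k⁴ ≤ R, then for clipped versions x̃_j = sign(x_j)min(|x_j|, τ), x̃_k = sign(x_k)min(|x_k|, τ), |E(x̃_j x̃_k − x_j x_k)| ≤ √2 R / τ². -/
open MeasureTheory

/-- Clipping of a real number at threshold τ. -/
noncomputable def clip (τ t : ℝ) : ℝ := Real.sign t * min |t| τ

lemma real_sign_mul_abs (r : ℝ) : Real.sign r * |r| = r := by
  rcases lt_trichotomy r 0 with h | rfl | h
  · rw [Real.sign_of_neg h, abs_of_neg h]; ring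
  · simp [Real.sign_zero]
  · rw [Real.sign_of_pos h, abs_of_pos h]; ring

lemma abs_real_sign_le_one (r : ℝ) : |Real.sign r| ≤ 1 := by
  rcases Real.sign_apply_eq r with h | h | h <;> simp [h]

/-- `clip` rewritten as a max/min, convenient for measurability. -/
lemma clip_eq_max_min {τ : ℝ} (hτ : 0 ≤ τ) (t : ℝ) :
    clip τ t = max (-τ) (min t τ) := by
  rcases lt_trichotomy t 0 with h | rfl | h
  · rw [clip, Real.sign_of_neg h, abs_of_neg h]
    rcases le_total (-t) τ with h2 | h2
    · rw [min_eq_left h2, min_eq_left (by linarith), max_eq_right (by linarith)]; ring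
    · rw [min_eq_right h2, min_eq_left (by linarith), max_eq_left (by linarith)]; ring
  · simp [clip, Real.sign_zero, hτ, le_max_iff]
  · rw [clip, Real.sign_of_pos h, abs_of_pos h, one_mul,
      max_eq_right (le_trans (neg_nonpos.2 hτ) (le_min h.le hτ))]

lemma clip_eq_self {τ t : ℝ} (h : |t| ≤ τ) : clip τ t = t := by
  rw [clip, min_eq_left h, real_sign_mul_abs]

lemma abs_clip_le {τ : ℝ} (hτ : 0 ≤ τ) (t : ℝ) : |clip τ t| ≤ τ := by
  rw [clip_eq_max_min hτ, abs_le]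
  constructor
  · exact le_max_left _ _
  · exact max_le (by linarith) (min_le_right _ _)

lemma clip_prod_key (τ s t : ℝ) :
    clip τ s * clip τ t - s * t
      = Real.sign s * Real.sign t * (min |s| τ * min |t| τ - |s| * |t|) := by
  have hs := real_sign_mul_abs s
  have ht := real_sign_mul_abs t
  simp only [clip]
  linear_combination t * hs + (Real.sign s * |s|) * ht

lemma clip_prod_bound {τ : ℝ} (hτ : 0 ≤ τ) (s t : ℝ) :
    |clip τ s * clip τ t - s * t| ≤ |s * t| := by
  rw [clip_prod_key, abs_mul s t, abs_mul]
  have h1 : |Real.sign s * Real.sign t| ≤ 1 := by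
    rw [abs_mul]
    calc |Real.sign s| * |Real.sign t| ≤ 1 * 1 :=
      mul_le_mul (abs_real_sign_le_one s) (abs_real_sign_le_one t) (abs_nonneg _) zero_le_one
    _ = 1 := one_mul 1
  have h2 : |(min |s| τ * min |t| τ - |s| * |t| : ℝ)| ≤ |s| * |t| := by
    have hms : 0 ≤ min |s| τ := le_min (abs_nonneg s) hτ
    have hmt : 0 ≤ min |t| τ := le_min (abs_nonneg t) hτ
    have : min |s| τ * min |t| τ ≤ |s| * |t| :=
      mul_le_mul (min_le_left _ _) (min_le_left _ _) hmt (abs_nonneg s)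
    rw [abs_sub_comm, abs_of_nonneg (by linarith)]
    nlinarith [mul_nonneg hms hmt]
  calc |Real.sign s * Real.sign t| * |(min |s| τ * min |t| τ - |s| * |t| : ℝ)|
      ≤ 1 * (|s| * |t|) := mul_le_mul h1 h2 (abs_nonneg _) zero_le_one
    _ = |s| * |t| := one_mul _


lemma measurable_clip {τ : ℝ} (hτ : 0 ≤ τ) : Measurable (clip τ) := by
  have : clip τ = fun t => max (-τ) (min t τ) := funext (clip_eq_max_min hτ)
  rw [this]
  exact measurable_const.max (measurable_id.min measurable_const)

/-- elementwise clipping bias bound |E(x̃_j x̃_k − x_j x_k)| ≤ √2·R/τ². -/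
theorem elementwise_clipping_bias {Ω : Type*} [MeasurableSpace Ω]
    (μ : Measure Ω) [IsProbabilityMeasure μ]
    (xj xk : Ω → ℝ) (R τ : ℝ) (hτ : 0 < τ)
    (hmj : AEMeasurable xj μ) (hmk : AEMeasurable xk μ)
    (hjk : Integrable (fun ω => (xj ω) ^ 2 * (xk ω) ^ 2) μ)
    (hj4 : Integrable (fun ω => (xj ω) ^ 4) μ)
    (hk4 : Integrable (fun ω => (xk ω) ^ 4) μ)
    (hintp : Integrable (fun ω => xj ω * xk ω) μ)
    (hRjk : ∫ ω, (xj ω) ^ 2 * (xk ω) ^ 2 ∂μ ≤ R)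
    (hRj : ∫ ω, (xj ω) ^ 4 ∂μ ≤ R) (hRk : ∫ ω, (xk ω) ^ 4 ∂μ ≤ R) :
    |∫ ω, (clip τ (xj ω) * clip τ (xk ω) - xj ω * xk ω) ∂μ|
      ≤ Real.sqrt 2 * R / τ ^ 2 := by
  have hR0 : 0 ≤ R := le_trans (integral_nonneg fun ω => by positivity) hRj
  set fj := hmj.mk xj with hfj_def
  set fk := hmk.mk xk with hfk_def
  have hfj : xj =ᵐ[μ] fj := hmj.ae_eq_mk
  have hfk : xk =ᵐ[μ] fk := hmk.ae_eq_mk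
  have hfjm : Measurable fj := hmj.measurable_mk
  have hfkm : Measurable fk := hmk.measurable_mk
  set S1 : Set Ω := {ω | τ ≤ |fj ω|} with hS1_def
  set S2 : Set Ω := {ω | τ ≤ |fk ω|} with hS2_def
  have hS1 : MeasurableSet S1 := measurableSet_le measurable_const hfjm.abs
  have hS2 : MeasurableSet S2 := measurableSet_le measurable_const hfkm.abs
  set A : Set Ω := S1 ∪ S2 with hA_def
  have hA : MeasurableSet A := hS1.union hS2
  set G : Ω → ℝ := A.indicator (fun _ => (1 : ℝ)) with hG_def
  set F : Ω → ℝ := fun ω => |xj ω * xk ω| with hF_def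
  -- Markov bounds
  have markov : ∀ (x : Ω → ℝ) (f : Ω → ℝ), x =ᵐ[μ] f →
      Integrable (fun ω => x ω ^ 4) μ → (∫ ω, x ω ^ 4 ∂μ) ≤ R →
      (μ {ω | τ ≤ |f ω|}).toReal ≤ R / τ ^ 4 := by
    intro x f hxf hint hRx
    have hset : μ {ω | τ ≤ |f ω|} = μ {ω | τ ^ 4 ≤ x ω ^ 4} := by
      refine measure_congr ?_
      have := hxf
      filter_upwards [hxf] with ω hω
      have : (τ ≤ |f ω|) = (τ ^ 4 ≤ x ω ^ 4) := by
        rw [← hω]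
        apply propext
        constructor
        · intro h
          calc τ ^ 4 ≤ |x ω| ^ 4 := pow_le_pow_left₀ hτ.le h 4
            _ = x ω ^ 4 := by rw [← abs_pow, abs_of_nonneg (by positivity)]
        · intro h
          by_contra hc
          push_neg at hc
          have : x ω ^ 4 < τ ^ 4 := by
            calc x ω ^ 4 = |x ω| ^ 4 := by rw [← abs_pow, abs_of_nonneg (by positivity)]
              _ < τ ^ 4 := by
                exact pow_lt_pow_left₀ hc (abs_nonneg _) (by norm_num)
          linarith
      exact this
    rw [hset]
    have hmk := mul_meas_ge_le_integral_of_nonneg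
      (f := fun ω => x ω ^ 4) (Filter.Eventually.of_forall fun ω => by positivity) hint (τ ^ 4)
    have hτ4 : (0:ℝ) < τ ^ 4 := by positivity
    calc (μ {ω | τ ^ 4 ≤ x ω ^ 4}).toReal
        ≤ (∫ ω, x ω ^ 4 ∂μ) / τ ^ 4 := by
          rw [le_div_iff₀ hτ4, mul_comm]; exact hmk
      _ ≤ R / τ ^ 4 := by gcongr
  have hm1 : (μ S1).toReal ≤ R / τ ^ 4 := markov xj fj hfj hj4 hRj
  have hm2 : (μ S2).toReal ≤ R / τ ^ 4 := markov xk fk hfk hk4 hRk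
  have hmA : (μ A).toReal ≤ 2 * R / τ ^ 4 := by
    have h1 : μ A ≤ μ S1 + μ S2 := measure_union_le S1 S2
    have h2 : (μ A).toReal ≤ (μ S1 + μ S2).toReal :=
      ENNReal.toReal_mono (by finiteness) h1
    rw [ENNReal.toReal_add (by finiteness) (by finiteness)] at h2
    calc (μ A).toReal ≤ (μ S1).toReal + (μ S2).toReal := h2
      _ ≤ R / τ ^ 4 + R / τ ^ 4 := add_le_add hm1 hm2
      _ = 2 * R / τ ^ 4 := by ring
  have hmA0 : 0 ≤ (μ A).toReal := ENNReal.toReal_nonneg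
  -- integrability facts
  have hclipmeas : AEStronglyMeasurable (fun ω => clip τ (xj ω) * clip τ (xk ω)) μ :=
    (((measurable_clip hτ.le).comp_aemeasurable hmj).mul
      ((measurable_clip hτ.le).comp_aemeasurable hmk)).aestronglyMeasurable
  have hclip_int : Integrable (fun ω => clip τ (xj ω) * clip τ (xk ω)) μ := by
    refine Integrable.mono' (integrable_const (τ * τ)) hclipmeas ?_
    filter_upwards with ω
    rw [Real.norm_eq_abs, abs_mul]
    exact mul_le_mul (abs_clip_le hτ.le _) (abs_clip_le hτ.le _) (abs_nonneg _) hτ.le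
  have hD_int : Integrable
      (fun ω => clip τ (xj ω) * clip τ (xk ω) - xj ω * xk ω) μ := hclip_int.sub hintp
  have hFG_int : Integrable (fun ω => F ω * G ω) μ := by
    refine Integrable.mono' hintp.abs
      ((hintp.abs.aestronglyMeasurable).mul
        ((measurable_one.indicator hA).aestronglyMeasurable)) ?_
    filter_upwards with ω
    rw [Real.norm_eq_abs, abs_mul, hF_def]
    simp only [abs_abs]
    rcases Set.indicator_eq_zero_or_self A (fun _ => (1:ℝ)) ω with h | h <;>
      rw [hG_def, h] <;> simp [abs_nonneg] <;> positivity
  -- pointwise bound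
  have hpt : ∀ᵐ ω ∂μ,
      |clip τ (xj ω) * clip τ (xk ω) - xj ω * xk ω| ≤ F ω * G ω := by
    filter_upwards [hfj, hfk] with ω h1 h2
    by_cases hω : ω ∈ A
    · rw [hG_def, Set.indicator_of_mem hω, mul_one]
      exact clip_prod_bound hτ.le _ _
    · rw [hG_def, Set.indicator_of_notMem hω, mul_zero]
      have hj' : |xj ω| ≤ τ := by
        have : ¬ τ ≤ |fj ω| := fun h => hω (Or.inl h)
        rw [h1]; linarith [not_le.mp this]
      have hk' : |xk ω| ≤ τ := by
        have : ¬ τ ≤ |fk ω| := fun h => hω (Or.inr h)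
        rw [h2]; linarith [not_le.mp this]
      rw [clip_eq_self hj', clip_eq_self hk', sub_self, abs_zero]
  -- Cauchy–Schwarz
  have hF2_int : Integrable (fun ω => F ω ^ 2) μ := by
    have : (fun ω => F ω ^ 2) = fun ω => (xj ω) ^ 2 * (xk ω) ^ 2 := by
      funext ω; rw [hF_def]; rw [sq_abs]; ring
    rw [this]; exact hjk
  have hFmem : MemLp F 2 μ :=
    (memLp_two_iff_integrable_sq hintp.abs.aestronglyMeasurable).mpr hF2_int
  have hGmem : MemLp G 2 μ := by
    rw [hG_def]
    exact memLp_indicator_const 2 hA 1 (Or.inr (measure_ne_top μ A))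
  have hCS : ∫ ω, F ω * G ω ∂μ ≤
      (∫ ω, F ω ^ (2:ℝ) ∂μ) ^ ((1:ℝ)/2) * (∫ ω, G ω ^ (2:ℝ) ∂μ) ^ ((1:ℝ)/2) := by
    refine integral_mul_le_Lp_mul_Lq_of_nonneg
      Real.HolderConjugate.two_two ?_ ?_ ?_ ?_
    · filter_upwards with ω; exact abs_nonneg _
    · filter_upwards with ω; exact Set.indicator_nonneg (fun _ _ => zero_le_one) ω
    · rw [show ENNReal.ofReal (2:ℝ) = 2 by simp]; exact hFmem
    · rw [show ENNReal.ofReal (2:ℝ) = 2 by simp]; exact hGmem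
  -- compute the two L2 factors
  have hF2 : ∫ ω, F ω ^ (2:ℝ) ∂μ = ∫ ω, (xj ω) ^ 2 * (xk ω) ^ 2 ∂μ := by
    refine integral_congr_ae (Filter.Eventually.of_forall fun ω => ?_)
    beta_reduce
    rw [show (2:ℝ) = ((2:ℕ):ℝ) by norm_num, Real.rpow_natCast]
    simp only [hF_def]
    rw [sq_abs]; ring
  have hG2 : ∫ ω, G ω ^ (2:ℝ) ∂μ = (μ A).toReal := by
    have h1 : ∀ ω, G ω ^ (2:ℝ) = G ω := by
      intro ω
      rcases Set.indicator_eq_zero_or_self A (fun _ => (1:ℝ)) ω with h | h <;>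
        rw [hG_def, h] <;> simp
    simp only [h1]
    rw [hG_def, integral_indicator_const (1:ℝ) hA, smul_eq_mul, mul_one]
    rfl
  have hIjk0 : 0 ≤ ∫ ω, (xj ω) ^ 2 * (xk ω) ^ 2 ∂μ :=
    integral_nonneg fun ω => by positivity
  -- chain of inequalities
  have habs : |∫ ω, (clip τ (xj ω) * clip τ (xk ω) - xj ω * xk ω) ∂μ|
      ≤ ∫ ω, |clip τ (xj ω) * clip τ (xk ω) - xj ω * xk ω| ∂μ := by
    have := norm_integral_le_integral_norm
      (μ := μ) (f := fun ω => clip τ (xj ω) * clip τ (xk ω) - xj ω * xk ω)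
    simpa [Real.norm_eq_abs] using this
  have hmono : ∫ ω, |clip τ (xj ω) * clip τ (xk ω) - xj ω * xk ω| ∂μ
      ≤ ∫ ω, F ω * G ω ∂μ := integral_mono_ae hD_int.abs hFG_int hpt
  have hfinal :
      (∫ ω, F ω ^ (2:ℝ) ∂μ) ^ ((1:ℝ)/2) * (∫ ω, G ω ^ (2:ℝ) ∂μ) ^ ((1:ℝ)/2)
        ≤ Real.sqrt 2 * R / τ ^ 2 := by
    rw [hF2, hG2, ← Real.sqrt_eq_rpow, ← Real.sqrt_eq_rpow,
      ← Real.sqrt_mul hIjk0]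
    have hb : (∫ ω, (xj ω) ^ 2 * (xk ω) ^ 2 ∂μ) * (μ A).toReal
        ≤ (Real.sqrt 2 * R / τ ^ 2) ^ 2 := by
      have h2 : (Real.sqrt 2) ^ 2 = 2 := Real.sq_sqrt (by norm_num)
      have : (Real.sqrt 2 * R / τ ^ 2) ^ 2 = 2 * R ^ 2 / τ ^ 4 := by
        rw [div_pow, mul_pow, h2]; ring
      rw [this]
      calc (∫ ω, (xj ω) ^ 2 * (xk ω) ^ 2 ∂μ) * (μ A).toReal
          ≤ R * (2 * R / τ ^ 4) :=
            mul_le_mul hRjk hmA hmA0 hR0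
        _ = 2 * R ^ 2 / τ ^ 4 := by ring
    calc Real.sqrt ((∫ ω, (xj ω) ^ 2 * (xk ω) ^ 2 ∂μ) * (μ A).toReal)
        ≤ Real.sqrt ((Real.sqrt 2 * R / τ ^ 2) ^ 2) := Real.sqrt_le_sqrt hb
      _ = Real.sqrt 2 * R / τ ^ 2 := Real.sqrt_sq (by positivity)
  linarith [habs, hmono, hCS, hfinal]
end

section
/- Localized strong convexity implies error bound: if a differentiable convex function L on ℝ^d satisfies δL(β* + Δ; β*) ≥ κ‖Δ‖₂² − τ_L for all ‖Δ‖₂ ≤ r, and β̂ minimizes L with the intermediate point β_η = β* + η(β̂ − β*) where η = min(1, r/‖β̂ − β*‖₂), then ‖β_η − β*‖₂ ≤ ‖∇L(β*)‖₂/κ + √(τ_L/κ). -/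
/-- localized strong convexity implies the error bound
‖β_η − β*‖₂ ≤ ‖∇L(β*)‖₂/κ + √(τ_L/κ). -/
theorem localized_rsc_error_bound {d : ℕ}
    (L : EuclideanSpace ℝ (Fin d) → ℝ)
    (hdiff : Differentiable ℝ L)
    (hconv : ConvexOn ℝ Set.univ L)
    (βs βhat : EuclideanSpace ℝ (Fin d))
    (κ τL r : ℝ) (hκ : 0 < κ) (hτL : 0 ≤ τL) (hr : 0 < r)
    (hrsc : ∀ Δ : EuclideanSpace ℝ (Fin d), ‖Δ‖ ≤ r →
      L (βs + Δ) - L βs - (inner ℝ (gradient L βs) Δ : ℝ) ≥ κ * ‖Δ‖ ^ 2 - τL)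
    (hmin : ∀ β, L βhat ≤ L β)
    (η : ℝ) (hη : η = min 1 (r / ‖βhat - βs‖)) :
    ‖(βs + η • (βhat - βs)) - βs‖ ≤ ‖gradient L βs‖ / κ + Real.sqrt (τL / κ) := by
  have hq0 : 0 ≤ Real.sqrt (τL / κ) := Real.sqrt_nonneg _
  have hqsq : Real.sqrt (τL / κ) ^ 2 = τL / κ :=
    Real.sq_sqrt (div_nonneg hτL hκ.le)
  have hg0 : (0:ℝ) ≤ ‖gradient L βs‖ := norm_nonneg _
  by_cases hbb : βhat = βs
  · subst hbb
    simp only [sub_self, smul_zero, add_zero, norm_zero]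
    positivity
  · set n : ℝ := ‖βhat - βs‖ with hn
    have hn0 : 0 < n := by
      rw [hn, norm_pos_iff]
      exact sub_ne_zero_of_ne hbb
    have hη0 : 0 ≤ η := by
      rw [hη]; exact le_min zero_le_one (le_of_lt (div_pos hr hn0))
    have hη1 : η ≤ 1 := by rw [hη]; exact min_le_left _ _
    set Δ : EuclideanSpace ℝ (Fin d) := η • (βhat - βs) with hΔ
    have hΔnorm : ‖Δ‖ = η * n := by
      rw [hΔ, norm_smul, Real.norm_eq_abs, abs_of_nonneg hη0, hn]
    have hΔr : ‖Δ‖ ≤ r := by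
      rw [hΔnorm]
      have h1 : η ≤ r / n := by rw [hη]; exact min_le_right _ _
      calc η * n ≤ (r / n) * n := by nlinarith
        _ = r := by field_simp
    have hLle : L (βs + Δ) ≤ L βs := by
      have hc := hconv.2 (Set.mem_univ βs) (Set.mem_univ βhat)
        (show (0:ℝ) ≤ 1 - η by linarith) hη0 (by ring)
      have heq : (1 - η) • βs + η • βhat = βs + Δ := by
        rw [hΔ, smul_sub]; module
      rw [heq] at hc
      calc L (βs + Δ) ≤ (1 - η) * L βs + η * L βhat := hc
        _ ≤ (1 - η) * L βs + η * L βs := by nlinarith [hmin βs]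
        _ = L βs := by ring
    have hinner : -(inner ℝ (gradient L βs) Δ : ℝ) ≤ ‖gradient L βs‖ * ‖Δ‖ := by
      have h1 := abs_real_inner_le_norm (gradient L βs) Δ
      have h2 := neg_abs_le (inner ℝ (gradient L βs) Δ : ℝ)
      linarith
    have hkey := hrsc Δ hΔr
    have hquad : κ * ‖Δ‖ ^ 2 - τL ≤ ‖gradient L βs‖ * ‖Δ‖ := by linarith
    have hΔ0 : (0:ℝ) ≤ ‖Δ‖ := norm_nonneg _
    set q : ℝ := Real.sqrt (τL / κ) with hqdef
    have hτκ : κ * q ^ 2 = τL := by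
      rw [hqdef, hqsq]; field_simp
    have hfin : ‖Δ‖ ≤ ‖gradient L βs‖ / κ + q := by
      rcases eq_or_lt_of_le (add_nonneg hΔ0 hq0) with he | hpos
      · have ht : ‖Δ‖ = 0 := by linarith
        rw [ht]
        have : 0 ≤ ‖gradient L βs‖ / κ := div_nonneg hg0 hκ.le
        linarith
      · have h3 : κ * (‖Δ‖ - q) * (‖Δ‖ + q) ≤ ‖gradient L βs‖ * (‖Δ‖ + q) := by
          nlinarith [mul_nonneg hg0 hq0]
        have h4 : κ * (‖Δ‖ - q) ≤ ‖gradient L βs‖ :=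
          (mul_le_mul_iff_of_pos_right hpos).mp h3
        have h5 : ‖Δ‖ - q ≤ ‖gradient L βs‖ / κ :=
          (le_div_iff₀ hκ).mpr (by linarith)
        linarith
    simpa [hΔ] using hfin
end
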